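/- Let m ≥ 1 be an integer and q > 0 a real number. Then every complex root t of the polynomial P(t) = ∑_{j=0}^{m} q^j t^{2j} satisfies |t| = q^{-1/2}. -/

import Mathlib

/-- Strong RH for the torus knots `T(2,2m+1)` at `a = 0`: every complex root `t` of
`P(t) = ∑_{j=0}^m q^j t^{2j}` (with `m ≥ 1` and `q > 0` real) has `|t| = q^{-1/2}`. -/
theorem stmt0 (m : ℕ) (hm : 1 ≤ m) (q : ℝ) (hq : 0 < q) (t : ℂ)
    (ht : ∑ j ∈ Finset.range (m + 1), (q : ℂ) ^ j * t ^ (2 * j) = 0) :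
    ‖t‖ = q ^ (-(1 / 2) : ℝ) := by
  set z : ℂ := (q : ℂ) * t ^ 2 with hz
  have hsum : ∑ j ∈ Finset.range (m + 1), z ^ j = 0 := by
    rw [← ht]
    refine Finset.sum_congr rfl fun j _ => ?_
    rw [hz, mul_pow, pow_mul]
  have hpow : z ^ (m + 1) = 1 := by
    have := geom_sum_mul z (m + 1)
    rw [hsum, zero_mul] at this
    linear_combination -this
  have habs : ‖z‖ = 1 := by
    have h1 : ‖z‖ ^ (m + 1) = 1 ^ (m + 1) := by
      rw [← norm_pow, hpow, norm_one, one_pow]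
    exact (pow_left_inj₀ (norm_nonneg z) zero_le_one (Nat.succ_ne_zero m)).1 h1
  have habs2 : q * ‖t‖ ^ 2 = 1 := by
    have := habs
    rw [hz, norm_mul, norm_pow, Complex.norm_real, Real.norm_eq_abs, abs_of_pos hq] at this
    exact this
  have ht2 : ‖t‖ = Real.sqrt q⁻¹ := by
    rw [show (q⁻¹ : ℝ) = ‖t‖ ^ 2 by field_simp; linarith [habs2]]
    exact (Real.sqrt_sq (norm_nonneg t)).symm
  rw [ht2, Real.sqrt_inv, Real.sqrt_eq_rpow, Real.rpow_neg hq.le]
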